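/- The bound state Y_λ(η) = 1/(2cosh(λη)) is orthogonal in L²(ℝ) to each continuous-spectrum eigenfunction Y(n,·): ∫_{−∞}^{∞} Y_λ(η) · conj(Y(n,η)) dη = 0 for every real n ≠ 0. -/

import Mathlib

open MeasureTheory Set Filter Real Complex Topology

lemma aux_abs_sinh_lt (x : ℝ) : |Real.sinh x| < Real.cosh x := by
  rw [abs_lt]
  constructor
  · nlinarith [Real.cosh_add_sinh x, Real.exp_pos x]
  · nlinarith [Real.cosh_sub_sinh x, Real.exp_pos (-x)]

lemma aux_abs_tanh_le (x : ℝ) : |Real.tanh x| ≤ 1 := by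
  rw [Real.tanh_eq_sinh_div_cosh, abs_div, abs_of_pos (Real.cosh_pos x),
    div_le_one (Real.cosh_pos x)]
  exact (aux_abs_sinh_lt x).le

lemma aux_sech_le (t : ℝ) : 1 / (2 * Real.cosh t) ≤ Real.exp (-|t|) := by
  have h2 : 2 * Real.cosh t = Real.exp t + Real.exp (-t) := by
    rw [Real.cosh_eq]; ring
  have hle : Real.exp |t| ≤ 2 * Real.cosh t := by
    rcases abs_cases t with ⟨h, _⟩ | ⟨h, _⟩ <;> rw [h, h2] <;>
      nlinarith [Real.exp_pos t, Real.exp_pos (-t)]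
  rw [Real.exp_neg, one_div]
  exact inv_anti₀ (Real.exp_pos _) hle

lemma aux_exp_integrableOn_Iic {b : ℝ} (hb : 0 < b) :
    MeasureTheory.IntegrableOn (fun x => Real.exp (b * x)) (Set.Iic (0:ℝ)) := by
  have h := exp_neg_integrableOn_Ioi 0 hb
  have h2 := (MeasurePreserving.integrableOn_comp_preimage
    (Measure.measurePreserving_neg (volume : Measure ℝ))
    (Homeomorph.neg ℝ).measurableEmbedding).2 h
  have hpre : (Neg.neg : ℝ → ℝ) ⁻¹' (Set.Ioi 0) = Set.Iio 0 := by
    ext x; simp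
  rw [hpre] at h2
  have h3 : MeasureTheory.IntegrableOn (fun x => Real.exp (b * x)) (Set.Iio (0:ℝ)) := by
    refine h2.congr_fun (fun x _ => ?_) measurableSet_Iio
    simp [Function.comp, mul_comm]
  rwa [integrableOn_Iic_iff_integrableOn_Iio]

theorem stmt_12 (lam n : ℝ) (hlam : 0 < lam) (hn : n ≠ 0)
    (Y : ℝ → ℂ)
    (hY : Y = fun (η : ℝ) =>
      ((lam * Real.tanh (lam * η) + Complex.I * n) / (Complex.I * n - lam)) *
        Complex.exp (-Complex.I * n * η))
    (Ylam : ℝ → ℂ) (hYlam : Ylam = fun (η : ℝ) => ((1 / (2 * Real.cosh (lam * η)) : ℝ) : ℂ)) :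
    ∫ η : ℝ, Ylam η * starRingEnd ℂ (Y η) = 0 := by
  have hcosh : ∀ t : ℝ, (0:ℝ) < Real.cosh t := Real.cosh_pos
  set F : ℝ → ℂ := fun η => Complex.exp (Complex.I * n * η) / ((2 * Real.cosh (lam * η) : ℝ) : ℂ)
    with hF
  set G : ℝ → ℂ := fun η =>
    (Complex.I * n - ((lam * Real.tanh (lam * η) : ℝ) : ℂ)) * F η with hG
  -- nonvanishing denominators
  have hdne : ∀ η : ℝ, ((2 * Real.cosh (lam * η) : ℝ) : ℂ) ≠ 0 := by
    intro η
    exact_mod_cast (by positivity : (2 * Real.cosh (lam * η) : ℝ) ≠ 0)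
  have hinlam : (Complex.I * n + lam) ≠ 0 := by
    intro h
    have := congrArg Complex.im h
    simp at this
    exact hn this
  -- derivative
  have hder : ∀ η : ℝ, HasDerivAt F (G η) η := by
    intro η
    have hexp : HasDerivAt (fun η : ℝ => Complex.exp (Complex.I * n * η))
        (Complex.I * n * Complex.exp (Complex.I * n * η)) η := by
      have hlin : HasDerivAt (fun η : ℝ => Complex.I * n * (η : ℂ)) (Complex.I * n) η := by
        simpa using (Complex.ofRealCLM.hasDerivAt (x := η)).const_mul (Complex.I * n)
      simpa [mul_comm] using hlin.cexp
    have hcr : HasDerivAt (fun η : ℝ => 2 * Real.cosh (lam * η))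
        (2 * (Real.sinh (lam * η) * lam)) η := by
      have := (Real.hasDerivAt_cosh (lam * η)).comp η ((hasDerivAt_id η).const_mul lam)
      simpa [mul_comm] using this.const_mul 2
    have hc : HasDerivAt (fun η : ℝ => ((2 * Real.cosh (lam * η) : ℝ) : ℂ))
        ((2 * (Real.sinh (lam * η) * lam) : ℝ) : ℂ) η := hcr.ofReal_comp
    have hdiv : HasDerivAt F _ η := hexp.div hc (hdne η)
    convert hdiv using 1
    simp only [hG, hF]
    have hcc : Complex.cosh ((lam : ℂ) * (η : ℂ)) ≠ 0 := by
      rw [← Complex.ofReal_mul, ← Complex.ofReal_cosh]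
      exact_mod_cast (hcosh (lam * η)).ne'
    rw [Real.tanh_eq_sinh_div_cosh]
    push_cast
    field_simp
  -- norm of F
  have hFnorm : ∀ η : ℝ, ‖F η‖ = 1 / (2 * Real.cosh (lam * η)) := by
    intro η
    rw [hF]
    simp only [norm_div, Complex.norm_exp, Complex.norm_real, Real.norm_eq_abs]
    rw [abs_of_pos (by positivity)]
    congr 1
    simp [Complex.mul_re]
  -- norm bound for G
  have hGbound : ∀ η : ℝ, ‖G η‖ ≤ (|n| + lam) * Real.exp (-(lam * |η|)) := by
    intro η
    simp only [hG, norm_mul]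
    rw [hFnorm]
    have h1 : ‖Complex.I * n - ((lam * Real.tanh (lam * η) : ℝ) : ℂ)‖ ≤ |n| + lam := by
      refine (norm_sub_le _ _).trans ?_
      have hIn : ‖Complex.I * (n:ℂ)‖ = |n| := by
        simp [Complex.norm_real]
      have hR : ‖((lam * Real.tanh (lam * η) : ℝ) : ℂ)‖ ≤ lam := by
        rw [Complex.norm_real, Real.norm_eq_abs, abs_mul, abs_of_pos hlam]
        nlinarith [aux_abs_tanh_le (lam * η), hlam.le]
      rw [hIn]
      linarith
    have h2 : 1 / (2 * Real.cosh (lam * η)) ≤ Real.exp (-(lam * |η|)) := by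
      have := aux_sech_le (lam * η)
      rwa [abs_mul, abs_of_pos hlam] at this
    have h3 : (0:ℝ) ≤ 1 / (2 * Real.cosh (lam * η)) := by positivity
    exact mul_le_mul h1 h2 h3 (by positivity)
  -- continuity
  have hFc : Continuous F := by
    apply Continuous.div
    · exact Complex.continuous_exp.comp (by continuity)
    · continuity
    · exact hdne
  have hGc : Continuous G := by
    refine Continuous.mul (Continuous.sub continuous_const ?_) hFc
    have htanh : Continuous Real.tanh := by
      have h : Real.tanh = fun x => Real.sinh x / Real.cosh x := funext Real.tanh_eq_sinh_div_cosh
      rw [h]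
      exact Real.continuous_sinh.div Real.continuous_cosh fun x => (Real.cosh_pos x).ne'
    exact Complex.continuous_ofReal.comp
      (continuous_const.mul (htanh.comp (continuous_const.mul continuous_id)))
  -- integrability of G on Ioi 0 and Iic 0
  have hGint_Ioi : IntegrableOn G (Ioi (0:ℝ)) := by
    refine Integrable.mono ((exp_neg_integrableOn_Ioi 0 hlam).const_mul (|n| + lam))
      hGc.aestronglyMeasurable.restrict ?_
    rw [ae_restrict_iff' measurableSet_Ioi]
    filter_upwards with η hη
    have hb := hGbound η
    rw [abs_of_pos hη.out] at hb
    refine hb.trans (le_of_eq ?_)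
    rw [norm_mul, Real.norm_of_nonneg (by positivity), Real.norm_of_nonneg (Real.exp_pos _).le,
      neg_mul]
  have hGint_Iic : IntegrableOn G (Iic (0:ℝ)) := by
    refine Integrable.mono ((aux_exp_integrableOn_Iic hlam).const_mul (|n| + lam))
      hGc.aestronglyMeasurable.restrict ?_
    rw [ae_restrict_iff' measurableSet_Iic]
    filter_upwards with η hη
    have hb := hGbound η
    rw [abs_of_nonpos hη.out, mul_neg, neg_neg] at hb
    refine hb.trans (le_of_eq ?_)
    rw [norm_mul, Real.norm_of_nonneg (by positivity), Real.norm_of_nonneg (Real.exp_pos _).le]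
  -- limits of F at ±∞
  have hFbound : ∀ η : ℝ, ‖F η‖ ≤ Real.exp (-(lam * |η|)) := by
    intro η
    rw [hFnorm]
    have := aux_sech_le (lam * η)
    rwa [abs_mul, abs_of_pos hlam] at this
  have hexp_top : Tendsto (fun η : ℝ => Real.exp (-(lam * |η|))) atTop (𝓝 0) :=
    Real.tendsto_exp_atBot.comp (tendsto_neg_atTop_atBot.comp
      ((tendsto_abs_atTop_atTop).const_mul_atTop hlam))
  have hexp_bot : Tendsto (fun η : ℝ => Real.exp (-(lam * |η|))) atBot (𝓝 0) :=
    Real.tendsto_exp_atBot.comp (tendsto_neg_atTop_atBot.comp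
      ((tendsto_abs_atBot_atTop).const_mul_atTop hlam))
  have hFtop : Tendsto F atTop (𝓝 0) := squeeze_zero_norm hFbound hexp_top
  have hFbot : Tendsto F atBot (𝓝 0) := squeeze_zero_norm hFbound hexp_bot
  -- FTC on both halves
  have hIoi : ∫ η in Ioi (0:ℝ), G η = 0 - F 0 :=
    integral_Ioi_of_hasDerivAt_of_tendsto' (fun x _ => hder x) hGint_Ioi hFtop
  have hIic : ∫ η in Iic (0:ℝ), G η = F 0 - 0 :=
    integral_Iic_of_hasDerivAt_of_tendsto' (fun x _ => hder x) hGint_Iic hFbot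
  have hGzero : ∫ η : ℝ, G η = 0 := by
    have hunion := setIntegral_union (Iic_disjoint_Ioi (le_refl (0:ℝ))) measurableSet_Ioi
      hGint_Iic hGint_Ioi
    rw [Iic_union_Ioi, Measure.restrict_univ] at hunion
    rw [hunion, hIoi, hIic]
    ring
  -- rewrite integrand
  have hpt : ∀ η : ℝ, Ylam η * starRingEnd ℂ (Y η) = (Complex.I * n + lam)⁻¹ * G η := by
    intro η
    rw [hY, hYlam]
    simp only [hG, hF]
    simp only [map_mul, map_div₀, map_add, map_sub, map_neg, Complex.conj_I,
      Complex.conj_ofReal, ← Complex.exp_conj, neg_mul, neg_neg]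
    have hcc : Complex.cosh ((lam : ℂ) * (η : ℂ)) ≠ 0 := by
      rw [← Complex.ofReal_mul, ← Complex.ofReal_cosh]
      exact_mod_cast (hcosh (lam * η)).ne'
    have h2 : (-(Complex.I * (n:ℂ)) - (lam:ℂ)) ≠ 0 := by
      intro h
      apply hinlam
      linear_combination -h
    push_cast
    field_simp
    ring
  calc ∫ η : ℝ, Ylam η * starRingEnd ℂ (Y η)
      = ∫ η : ℝ, (Complex.I * n + lam)⁻¹ * G η := by
        congr 1; funext η; exact hpt η
    _ = (Complex.I * n + lam)⁻¹ * ∫ η : ℝ, G η := integral_const_mul _ _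
    _ = 0 := by rw [hGzero, mul_zero]
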